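/- Let C be a quasi-abelian category which is closed symmetric monoidal (with all finite limits and colimits). Then every morphism φ : M' → M'' of commutative monoid objects in C factors as φ = i ∘ π in the category of commutative monoid objects, where the morphism in C underlying π is a strict epimorphism and the morphism in C underlying i is a monomorphism. -/

import Mathlib

open CategoryTheory CategoryTheory.Limits

universe v u

/-- A morphism is a strict epimorphism if it is a cokernel of some morphism. -/
def IsStrictEpi {C : Type u} [Category.{v} C] [HasZeroMorphisms C]
    {X Y : C} (f : X ⟶ Y) : Prop :=
  ∃ (Z : C) (g : Z ⟶ X) (w : g ≫ f = 0), Nonempty (IsColimit (CokernelCofork.ofπ f w))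

/-- A morphism is a strict monomorphism if it is a kernel of some morphism. -/
def IsStrictMono {C : Type u} [Category.{v} C] [HasZeroMorphisms C]
    {X Y : C} (f : X ⟶ Y) : Prop :=
  ∃ (Z : C) (g : Y ⟶ Z) (w : f ≫ g = 0), Nonempty (IsLimit (KernelFork.ofι f w))

/-- A quasi-abelian category: an additive category (preadditive with all finite limits
and colimits) in which strict epimorphisms are stable under pullback and strict
monomorphisms are stable under pushout. -/
class QuasiAbelian (C : Type u) [Category.{v} C] [Preadditive C]
    [HasFiniteLimits C] [HasFiniteColimits C] : Prop where
  pullback_strictEpi : ∀ {X Y Z : C} (f : X ⟶ Z) (g : Y ⟶ Z),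
    IsStrictEpi f → IsStrictEpi (pullback.snd f g)
  pushout_strictMono : ∀ {X Y Z : C} (f : X ⟶ Y) (g : X ⟶ Z),
    IsStrictMono f → IsStrictMono (pushout.inr f g)

section Aux

open MonoidalCategory

lemma IsStrictEpi.epi {C : Type u} [Category.{v} C] [HasZeroMorphisms C]
    {X Y : C} {f : X ⟶ Y} (h : IsStrictEpi f) : Epi f := by
  obtain ⟨Z, g, w, ⟨hc⟩⟩ := h
  exact ⟨fun u v huv => Cofork.IsColimit.hom_ext hc (by simpa using huv)⟩

lemma descend_of_isColimit {C : Type u} [Category.{v} C] [HasZeroMorphisms C]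
    {Z A B : C} {g : Z ⟶ A} {e : A ⟶ B} {w : g ≫ e = 0}
    (hc : IsColimit (CokernelCofork.ofπ e w)) {T : C} (h : A ⟶ T) (hh : g ≫ h = 0) :
    ∃ h' : B ⟶ T, e ≫ h' = h :=
  ⟨hc.desc (CokernelCofork.ofπ h hh), Cofork.IsColimit.π_desc hc⟩

variable {C : Type u} [Category.{v} C] [MonoidalCategory C] [SymmetricCategory C]
  [MonoidalClosed C]

/-- In a symmetric monoidal category, right tensoring is isomorphic to left tensoring. -/
noncomputable def tensorRightIsoTensorLeft (X : C) : tensorRight X ≅ tensorLeft X :=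
  NatIso.ofComponents (fun Y => β_ Y X) (by intros; simp)

instance (X : C) : (tensorLeft X).IsLeftAdjoint := (ihom.adjunction X).isLeftAdjoint

instance (X : C) : PreservesColimits (tensorRight X) :=
  preservesColimits_of_natIso (tensorRightIsoTensorLeft X).symm

section
variable [HasZeroMorphisms C]

instance (X : C) : (tensorRight X).PreservesZeroMorphisms :=
  Functor.preservesZeroMorphisms_of_iso (tensorRightIsoTensorLeft X).symm

omit [SymmetricCategory C] in
lemma whiskerLeft_zero' (X : C) {A B : C} : X ◁ (0 : A ⟶ B) = 0 :=
  (tensorLeft X).map_zero A B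

lemma zero_whiskerRight' {A B : C} (X : C) : (0 : A ⟶ B) ▷ X = 0 :=
  (tensorRight X).map_zero A B

end

end Aux

open MonoidalCategory MonObj in
/-- In a closed symmetric monoidal quasi-abelian category (with all finite limits and
colimits), every morphism `φ : M' ⟶ M''` factors through its coimage. -/
theorem commMon_factorization
    {C : Type u} [Category.{v} C] [Preadditive C]
    [HasFiniteLimits C] [HasFiniteColimits C] [QuasiAbelian C]
    [MonoidalCategory C] [SymmetricCategory C] [MonoidalClosed C]
    {M' M'' : CommMon C} (φ : M' ⟶ M'') :
    ∃ (N : CommMon C) (π : M' ⟶ N) (i : N ⟶ M''),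
      π ≫ i = φ ∧ IsStrictEpi π.hom.hom ∧ Mono i.hom.hom := by
  set f : M'.X ⟶ M''.X := φ.hom.hom with hf
  set k : kernel f ⟶ M'.X := kernel.ι f with hk
  set N₀ : C := cokernel k with hN₀
  set c : M'.X ⟶ N₀ := cokernel.π k with hc
  set i : N₀ ⟶ M''.X := cokernel.desc k f (kernel.condition f) with hi
  have hci : c ≫ i = f := cokernel.π_desc k f (kernel.condition f)
  -- `c` is a strict epimorphism
  have hse : IsStrictEpi c := ⟨_, k, cokernel.condition k, ⟨cokernelIsCokernel k⟩⟩
  have hcepi : Epi c := hse.epi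
  -- `i` is a monomorphism
  have hmono : Mono i := by
    apply Preadditive.mono_of_cancel_zero
    intro T g hg
    have h1 : Epi (pullback.snd c g) := (QuasiAbelian.pullback_strictEpi c g hse).epi
    have h2 : pullback.fst c g ≫ f = 0 := by
      rw [← hci, ← Category.assoc, pullback.condition, Category.assoc, hg, comp_zero]
    have h3 : pullback.fst c g = kernel.lift f _ h2 ≫ k := (kernel.lift_ι f _ h2).symm
    have h4 : pullback.snd c g ≫ g = 0 := by
      rw [← pullback.condition, h3, Category.assoc, cokernel.condition, comp_zero]
    exact zero_of_epi_comp _ h4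
  -- descend the multiplication in two steps
  have wr : (k ▷ M'.X) ≫ (c ▷ M'.X) = 0 := by
    rw [← comp_whiskerRight, cokernel.condition, zero_whiskerRight']
  have wl : (N₀ ◁ k) ≫ (N₀ ◁ c) = 0 := by
    rw [← MonoidalCategory.whiskerLeft_comp, cokernel.condition, whiskerLeft_zero']
  have colim1 : IsColimit (CokernelCofork.ofπ (c ▷ M'.X) wr) :=
    isColimitCoforkMapOfIsColimit' (tensorRight M'.X) (cokernel.condition k)
      (cokernelIsCokernel k)
  have colim2 : IsColimit (CokernelCofork.ofπ (N₀ ◁ c) wl) :=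
    isColimitCoforkMapOfIsColimit' (tensorLeft N₀) (cokernel.condition k)
      (cokernelIsCokernel k)
  have hwrepi : Epi (c ▷ M'.X) := IsStrictEpi.epi ⟨_, _, wr, ⟨colim1⟩⟩
  have hwlepi : Epi (N₀ ◁ c) := IsStrictEpi.epi ⟨_, _, wl, ⟨colim2⟩⟩
  have hke : k ≫ f = 0 := kernel.condition f
  have hmulhom : μ[M'.X] ≫ f = (f ⊗ₘ f) ≫ μ[M''.X] := IsMonHom.mul_hom φ.hom.hom
  have honehom : η[M'.X] ≫ f = η[M''.X] := IsMonHom.one_hom φ.hom.hom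
  -- step 1: descend `μ[M'.X] ≫ c` along `c ▷ M'.X`
  have cond1 : (k ▷ M'.X) ≫ μ[M'.X] ≫ c = 0 := by
    rw [← cancel_mono i, zero_comp]
    slice_lhs 3 4 => rw [hci]
    slice_lhs 2 3 => rw [hmulhom]
    slice_lhs 2 2 => rw [MonoidalCategory.tensorHom_def]
    slice_lhs 1 2 => rw [← comp_whiskerRight, hke, zero_whiskerRight']
    simp
  obtain ⟨m₁, hm₁⟩ := descend_of_isColimit colim1 (μ[M'.X] ≫ c) cond1
  have hm₁i : m₁ ≫ i = (i ⊗ₘ f) ≫ μ[M''.X] := by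
    rw [← cancel_epi (c ▷ M'.X)]
    slice_lhs 1 2 => rw [hm₁]
    slice_lhs 2 3 => rw [hci]
    slice_lhs 1 2 => rw [hmulhom]
    slice_lhs 1 1 => rw [MonoidalCategory.tensorHom_def]
    slice_rhs 2 2 => rw [MonoidalCategory.tensorHom_def]
    slice_rhs 1 2 => rw [← comp_whiskerRight, hci]
  -- step 2: descend `m₁` along `N₀ ◁ c`
  have cond2 : (N₀ ◁ k) ≫ m₁ = 0 := by
    rw [← cancel_mono i, zero_comp, Category.assoc, hm₁i]
    slice_lhs 2 2 => rw [tensorHom_def' i f]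
    slice_lhs 1 2 => rw [← MonoidalCategory.whiskerLeft_comp, hke, whiskerLeft_zero']
    simp
  obtain ⟨mN, hmN⟩ := descend_of_isColimit colim2 m₁ cond2
  -- key relations
  have R1 : mN ≫ i = (i ⊗ₘ i) ≫ μ[M''.X] := by
    rw [← cancel_epi (N₀ ◁ c)]
    slice_lhs 1 2 => rw [hmN]
    rw [hm₁i]
    slice_lhs 1 1 => rw [tensorHom_def' i f]
    slice_rhs 2 2 => rw [tensorHom_def' i i]
    slice_rhs 1 2 => rw [← MonoidalCategory.whiskerLeft_comp, hci]
  have R2 : (c ⊗ₘ c) ≫ mN = μ[M'.X] ≫ c := by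
    rw [MonoidalCategory.tensorHom_def c c, Category.assoc, hmN, hm₁]
  have R3 : (η[M'.X] ≫ c) ≫ i = η[M''.X] := by rw [Category.assoc, hci, honehom]
  -- the monoid axioms for the coimage
  have one_mul' : ((η[M'.X] ≫ c) ▷ N₀) ≫ mN = (λ_ N₀).hom := by
    rw [← cancel_mono i]
    slice_lhs 2 3 => rw [R1]
    rw [tensorHom_def' i i]
    slice_lhs 1 2 => rw [← whisker_exchange]
    slice_lhs 2 3 => rw [← comp_whiskerRight, R3]
    slice_lhs 2 3 => rw [MonObj.one_mul]
    slice_lhs 1 2 => rw [leftUnitor_naturality]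
  have mul_one' : (N₀ ◁ (η[M'.X] ≫ c)) ≫ mN = (ρ_ N₀).hom := by
    rw [← cancel_mono i]
    slice_lhs 2 3 => rw [R1]
    rw [MonoidalCategory.tensorHom_def i i]
    slice_lhs 1 2 => rw [whisker_exchange]
    slice_lhs 2 3 => rw [← MonoidalCategory.whiskerLeft_comp, R3]
    slice_lhs 2 3 => rw [MonObj.mul_one]
    slice_lhs 1 2 => rw [rightUnitor_naturality]
  have mul_assoc' : (mN ▷ N₀) ≫ mN = (α_ N₀ N₀ N₀).hom ≫ (N₀ ◁ mN) ≫ mN := by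
    rw [← cancel_mono i]
    slice_lhs 2 3 => rw [R1]
    slice_lhs 2 2 => rw [tensorHom_def' i i]
    slice_lhs 1 2 => rw [← whisker_exchange]
    slice_lhs 2 3 => rw [← comp_whiskerRight, R1]
    slice_lhs 2 2 => rw [comp_whiskerRight]
    slice_lhs 3 4 => rw [MonObj.mul_assoc]
    slice_lhs 1 2 => rw [← tensorHom_def']
    slice_lhs 1 2 => rw [associator_naturality]
    -- right hand side
    slice_rhs 3 4 => rw [R1]
    slice_rhs 3 3 => rw [tensorHom_def' i i]
    slice_rhs 2 3 => rw [← MonoidalCategory.whiskerLeft_comp, R1]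
    slice_rhs 2 2 => rw [MonoidalCategory.whiskerLeft_comp]
    slice_rhs 3 4 => rw [whisker_exchange]
    slice_rhs 2 3 => rw [← tensorHom_def']

    simp only [Category.assoc]
  have mul_comm' : (β_ N₀ N₀).hom ≫ mN = mN := by
    rw [← cancel_mono i, Category.assoc, R1]
    rw [← BraidedCategory.braiding_naturality_assoc i i, IsCommMonObj.mul_comm M''.X]
  letI : MonObj N₀ := MonObj.mk (η[M'.X] ≫ c) mN one_mul' mul_one' mul_assoc'
  haveI : IsCommMonObj N₀ := ⟨mul_comm'⟩
  refine ⟨⟨N₀⟩, CommMon.homMk (Mon.Hom.mk' c rfl R2.symm), CommMon.homMk (Mon.Hom.mk' i R3 R1),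
    ?_, hse, hmono⟩
  exact CommMon.hom_ext _ _ hci
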